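/- Let B be a Boolean algebra, S a finite subset of B closed under meet ⊓ and containing ⊤, and let □ᵢ, □ⱼ, □ᵢⱼ : B → B all satisfy the modal axioms (m.i) and (m.ii), axiom (m.iv) (□ᵢ x ≤ □ᵢⱼ x and □ⱼ x ≤ □ᵢⱼ x for all x ∈ B) and the independence axiom (m.indep) (□ᵢⱼ x ≤ □ᵢ x ⊔ □ⱼ x for all x ∈ B). Then the fused basic propositional assignment is computed from the individual ones by: for every φ ∈ S, φ^{□ᵢⱼ} = ⊔_{ψ,η∈S: ψ⊓η = φ} (ψ^{□ᵢ} ⊓ η^{□ⱼ}). -/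
import Mathlib


open scoped Classical

/-- The basic propositional assignment (bpa) of `φ`:
`φ^□ = □φ ⊓ (⊔_{ψ ∈ S, ψ < φ} □ψ)ᶜ`. -/
noncomputable def bpa {B : Type*} [BooleanAlgebra B]
    (S : Finset B) (box : B → B) (φ : B) : B :=
  box φ ⊓ ((S.filter fun ψ => ψ < φ).sup box)ᶜ

section Aux

variable {B : Type*} [BooleanAlgebra B]

private lemma inf_le_of_le_compl_sup' {a b c : B} (h : a ≤ bᶜ ⊔ c) : b ⊓ a ≤ c := by
  calc b ⊓ a ≤ b ⊓ (bᶜ ⊔ c) := inf_le_inf_left _ h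
    _ = (b ⊓ bᶜ) ⊔ (b ⊓ c) := inf_sup_left _ _ _
    _ ≤ c := by simp

private lemma box_mono' (box : B → B) (mi : box ⊤ = ⊤)
    (mii : ∀ x y : B, box (xᶜ ⊔ y) ≤ (box x)ᶜ ⊔ box y)
    {x y : B} (h : x ≤ y) : box x ≤ box y := by
  have h1 : xᶜ ⊔ y = ⊤ := top_unique (by
    calc (⊤ : B) = xᶜ ⊔ x := compl_sup_eq_top.symm
      _ ≤ xᶜ ⊔ y := sup_le_sup_left h _)
  have h2 : (⊤ : B) ≤ (box x)ᶜ ⊔ box y := by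
    have := mii x y; rwa [h1, mi] at this
  have h3 := inf_le_of_le_compl_sup' (a := box x) (le_trans le_top h2)
  simpa using h3

private lemma box_inf' (box : B → B) (mi : box ⊤ = ⊤)
    (mii : ∀ x y : B, box (xᶜ ⊔ y) ≤ (box x)ᶜ ⊔ box y)
    (x y : B) : box x ⊓ box y ≤ box (x ⊓ y) := by
  have hy : y ≤ xᶜ ⊔ (x ⊓ y) := by
    calc y ≤ xᶜ ⊔ y := le_sup_right
      _ = (xᶜ ⊔ x) ⊓ (xᶜ ⊔ y) := by rw [compl_sup_eq_top, top_inf_eq]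
      _ = xᶜ ⊔ (x ⊓ y) := (sup_inf_left _ _ _).symm
  exact inf_le_of_le_compl_sup'
    ((box_mono' box mi mii hy).trans (mii x (x ⊓ y)))

private lemma box_le_sup_bpa (S : Finset B) (box : B → B) (mi : box ⊤ = ⊤)
    (mii : ∀ x y : B, box (xᶜ ⊔ y) ≤ (box x)ᶜ ⊔ box y) :
    ∀ n : ℕ, ∀ χ ∈ S, (S.filter fun ψ => ψ < χ).card ≤ n →
      box χ ≤ S.sup (bpa S box) := by
  intro n
  induction n using Nat.strong_induction_on with
  | _ n ih =>
    intro χ hχ hcard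
    set t := (S.filter fun ψ => ψ < χ).sup box with ht
    have h1 : box χ ≤ (box χ ⊓ tᶜ) ⊔ t := by
      calc box χ = box χ ⊓ (tᶜ ⊔ t) := by rw [compl_sup_eq_top, inf_top_eq]
        _ = (box χ ⊓ tᶜ) ⊔ (box χ ⊓ t) := inf_sup_left _ _ _
        _ ≤ (box χ ⊓ tᶜ) ⊔ t := sup_le_sup_left inf_le_right _
    refine h1.trans (sup_le (Finset.le_sup (f := bpa S box) hχ) ?_)
    refine Finset.sup_le ?_
    intro ψ hψ
    rw [Finset.mem_filter] at hψ
    obtain ⟨hψS, hψχ⟩ := hψ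
    have hsubset : (S.filter fun ξ => ξ < ψ) ⊆ (S.filter fun ξ => ξ < χ) := by
      intro ξ hξ
      rw [Finset.mem_filter] at hξ ⊢
      exact ⟨hξ.1, hξ.2.trans hψχ⟩
    have hss : (S.filter fun ξ => ξ < ψ) ⊂ (S.filter fun ξ => ξ < χ) := by
      rw [Finset.ssubset_iff_of_subset hsubset]
      exact ⟨ψ, Finset.mem_filter.mpr ⟨hψS, hψχ⟩, by simp⟩
    have hlt : (S.filter fun ξ => ξ < ψ).card < n :=
      lt_of_lt_of_le (Finset.card_lt_card hss) hcard
    exact ih _ hlt ψ hψS le_rfl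

private lemma sup_bpa_eq_top (S : Finset B) (box : B → B) (mi : box ⊤ = ⊤)
    (mii : ∀ x y : B, box (xᶜ ⊔ y) ≤ (box x)ᶜ ⊔ box y) (htop : ⊤ ∈ S) :
    S.sup (bpa S box) = ⊤ := by
  refine top_unique ?_
  have := box_le_sup_bpa S box mi mii ((S.filter fun ψ => ψ < ⊤).card) ⊤ htop le_rfl
  rwa [mi] at this

/-- Claim A: if `¬ ψ ≤ ξ` then `bpa ψ ⊓ □ξ = ⊥`. -/
private lemma bpa_inf_box_eq_bot (S : Finset B) (box : B → B) (mi : box ⊤ = ⊤)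
    (mii : ∀ x y : B, box (xᶜ ⊔ y) ≤ (box x)ᶜ ⊔ box y)
    (hmeet : ∀ x ∈ S, ∀ y ∈ S, x ⊓ y ∈ S)
    {ψ ξ : B} (hψ : ψ ∈ S) (hξ : ξ ∈ S) (h : ¬ ψ ≤ ξ) :
    bpa S box ψ ⊓ box ξ = ⊥ := by
  set t := (S.filter fun χ => χ < ψ).sup box with ht
  have hmem : ψ ⊓ ξ ∈ S.filter fun χ => χ < ψ := by
    refine Finset.mem_filter.mpr ⟨hmeet _ hψ _ hξ, lt_of_le_of_ne inf_le_left ?_⟩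
    intro he
    exact h (he ▸ inf_le_right)
  rw [eq_bot_iff]
  calc bpa S box ψ ⊓ box ξ = (box ψ ⊓ box ξ) ⊓ tᶜ := by
        rw [bpa, inf_right_comm]
    _ ≤ box (ψ ⊓ ξ) ⊓ tᶜ := inf_le_inf_right _ (box_inf' box mi mii _ _)
    _ ≤ t ⊓ tᶜ := inf_le_inf_right _ (Finset.le_sup hmem)
    _ ≤ ⊥ := by simp

end Aux

/-- The fused basic propositional assignment satisfies
`φ^{□ᵢⱼ} = ⊔_{ψ⊓η = φ} (ψ^{□ᵢ} ⊓ η^{□ⱼ})` for every `φ ∈ S`. -/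
theorem bpa_fused_eq_sup {B : Type*} [BooleanAlgebra B]
    (S : Finset B)
    (hmeet : ∀ x ∈ S, ∀ y ∈ S, x ⊓ y ∈ S)
    (htop : ⊤ ∈ S)
    (boxI boxJ boxIJ : B → B)
    (miI : boxI ⊤ = ⊤)
    (miiI : ∀ x y : B, boxI (xᶜ ⊔ y) ≤ (boxI x)ᶜ ⊔ boxI y)
    (miJ : boxJ ⊤ = ⊤)
    (miiJ : ∀ x y : B, boxJ (xᶜ ⊔ y) ≤ (boxJ x)ᶜ ⊔ boxJ y)
    (miIJ : boxIJ ⊤ = ⊤)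
    (miiIJ : ∀ x y : B, boxIJ (xᶜ ⊔ y) ≤ (boxIJ x)ᶜ ⊔ boxIJ y)
    (mivI : ∀ x : B, boxI x ≤ boxIJ x)
    (mivJ : ∀ x : B, boxJ x ≤ boxIJ x)
    (mindep : ∀ x : B, boxIJ x ≤ boxI x ⊔ boxJ x) :
    ∀ φ ∈ S,
      bpa S boxIJ φ =
        ((S ×ˢ S).filter fun q => q.1 ⊓ q.2 = φ).sup
          (fun q => bpa S boxI q.1 ⊓ bpa S boxJ q.2) := by
  intro φ hφ
  set RHS := ((S ×ˢ S).filter fun q => q.1 ⊓ q.2 = φ).sup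
      (fun q => bpa S boxI q.1 ⊓ bpa S boxJ q.2) with hRHS
  have hbpa_le_box : ∀ (box : B → B) (χ : B), bpa S box χ ≤ box χ := by
    intro box χ; exact inf_le_left
  -- key product bound: bpaI ψ ⊓ bpaJ η ≤ boxIJ (ψ ⊓ η)
  have hprod : ∀ ψ η : B, bpa S boxI ψ ⊓ bpa S boxJ η ≤ boxIJ (ψ ⊓ η) := by
    intro ψ η
    calc bpa S boxI ψ ⊓ bpa S boxJ η ≤ boxI ψ ⊓ boxJ η :=
          inf_le_inf (hbpa_le_box _ _) (hbpa_le_box _ _)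
      _ ≤ boxIJ ψ ⊓ boxIJ η := inf_le_inf (mivI ψ) (mivJ η)
      _ ≤ boxIJ (ψ ⊓ η) := box_inf' boxIJ miIJ miiIJ ψ η
  apply le_antisymm
  · -- ≤ direction
    have key : ∀ ψ ∈ S, ∀ η ∈ S,
        bpa S boxIJ φ ⊓ bpa S boxI ψ ⊓ bpa S boxJ η ≤ RHS := by
      intro ψ hψ η hη
      by_cases hq : ψ ⊓ η = φ
      · have hmem : (ψ, η) ∈ (S ×ˢ S).filter fun q => q.1 ⊓ q.2 = φ := by
          rw [Finset.mem_filter, Finset.mem_product]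
          exact ⟨⟨hψ, hη⟩, hq⟩
        calc bpa S boxIJ φ ⊓ bpa S boxI ψ ⊓ bpa S boxJ η
            ≤ bpa S boxI ψ ⊓ bpa S boxJ η := by
              rw [inf_assoc]; exact inf_le_right
          _ ≤ RHS := Finset.le_sup (f := fun q => bpa S boxI q.1 ⊓ bpa S boxJ q.2) hmem
      · -- the term is ⊥
        suffices hbot : bpa S boxIJ φ ⊓ bpa S boxI ψ ⊓ bpa S boxJ η ≤ ⊥ by
          exact hbot.trans bot_le
        by_cases hle : ψ ⊓ η ≤ φ
        · -- ψ⊓η < φ : killed by the complement in bpa S boxIJ φ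
          have hχ : ψ ⊓ η ∈ S.filter fun χ => χ < φ :=
            Finset.mem_filter.mpr ⟨hmeet _ hψ _ hη, lt_of_le_of_ne hle hq⟩
          have h2 : bpa S boxIJ φ ≤ (boxIJ (ψ ⊓ η))ᶜ :=
            le_trans inf_le_right (compl_le_compl (Finset.le_sup hχ))
          calc bpa S boxIJ φ ⊓ bpa S boxI ψ ⊓ bpa S boxJ η
              ≤ (boxIJ (ψ ⊓ η))ᶜ ⊓ boxIJ (ψ ⊓ η) := by
                rw [inf_assoc]
                exact inf_le_inf h2 (hprod ψ η)
            _ ≤ ⊥ := by simp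
        · -- ¬(ψ⊓η ≤ φ) : then ¬ψ≤φ and ¬η≤φ, use mindep + Claim A
          have hψφ : ¬ ψ ≤ φ := fun h => hle (le_trans inf_le_left h)
          have hηφ : ¬ η ≤ φ := fun h => hle (le_trans inf_le_right h)
          have hI : bpa S boxI ψ ⊓ boxI φ = ⊥ :=
            bpa_inf_box_eq_bot S boxI miI miiI hmeet hψ hφ hψφ
          have hJ : bpa S boxJ η ⊓ boxJ φ = ⊥ :=
            bpa_inf_box_eq_bot S boxJ miJ miiJ hmeet hη hφ hηφ
          have ha : bpa S boxIJ φ ≤ boxI φ ⊔ boxJ φ :=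
            le_trans inf_le_left (mindep φ)
          calc bpa S boxIJ φ ⊓ bpa S boxI ψ ⊓ bpa S boxJ η
              ≤ (boxI φ ⊔ boxJ φ) ⊓ (bpa S boxI ψ ⊓ bpa S boxJ η) := by
                rw [inf_assoc]
                exact inf_le_inf ha le_rfl
            _ = (boxI φ ⊓ (bpa S boxI ψ ⊓ bpa S boxJ η)) ⊔
                (boxJ φ ⊓ (bpa S boxI ψ ⊓ bpa S boxJ η)) := inf_sup_right _ _ _
            _ ≤ ⊥ := by
                refine sup_le ?_ ?_
                · calc boxI φ ⊓ (bpa S boxI ψ ⊓ bpa S boxJ η)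
                      ≤ boxI φ ⊓ bpa S boxI ψ := inf_le_inf_left _ inf_le_left
                    _ = bpa S boxI ψ ⊓ boxI φ := inf_comm _ _
                    _ ≤ ⊥ := hI.le
                · calc boxJ φ ⊓ (bpa S boxI ψ ⊓ bpa S boxJ η)
                      ≤ boxJ φ ⊓ bpa S boxJ η := inf_le_inf_left _ inf_le_right
                    _ = bpa S boxJ η ⊓ boxJ φ := inf_comm _ _
                    _ ≤ ⊥ := hJ.le
    have hcovI : S.sup (bpa S boxI) = ⊤ := sup_bpa_eq_top S boxI miI miiI htop
    have hcovJ : S.sup (bpa S boxJ) = ⊤ := sup_bpa_eq_top S boxJ miJ miiJ htop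
    calc bpa S boxIJ φ
        = bpa S boxIJ φ ⊓ S.sup (bpa S boxI) ⊓ S.sup (bpa S boxJ) := by
          rw [hcovI, hcovJ, inf_top_eq, inf_top_eq]
      _ ≤ RHS := by
          rw [Finset.sup_inf_distrib_left]
          refine Finset.sup_le ?_
          intro η hη
          rw [Finset.sup_inf_distrib_left, Finset.sup_inf_distrib_right]
          refine Finset.sup_le ?_
          intro ψ hψ
          exact key ψ hψ η hη
  · -- ≥ direction
    refine Finset.sup_le ?_
    intro q hq
    rw [Finset.mem_filter, Finset.mem_product] at hq
    obtain ⟨⟨hψ, hη⟩, hqeq⟩ := hq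
    rw [bpa]
    refine le_inf ?_ ?_
    · calc bpa S boxI q.1 ⊓ bpa S boxJ q.2 ≤ boxIJ (q.1 ⊓ q.2) := hprod _ _
        _ = boxIJ φ := by rw [hqeq]
    · rw [le_compl_iff_disjoint_right, Finset.disjoint_sup_right]
      intro χ hχ
      rw [Finset.mem_filter] at hχ
      obtain ⟨hχS, hχφ⟩ := hχ
      have hψχ : ¬ q.1 ≤ χ := by
        intro h
        have hφχ : φ ≤ χ := hqeq ▸ le_trans inf_le_left h
        exact absurd (lt_of_le_of_lt hφχ hχφ) (lt_irrefl φ)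
      have hηχ : ¬ q.2 ≤ χ := by
        intro h
        have hφχ : φ ≤ χ := hqeq ▸ le_trans inf_le_right h
        exact absurd (lt_of_le_of_lt hφχ hχφ) (lt_irrefl φ)
      have hI : bpa S boxI q.1 ⊓ boxI χ = ⊥ :=
        bpa_inf_box_eq_bot S boxI miI miiI hmeet hψ hχS hψχ
      have hJ : bpa S boxJ q.2 ⊓ boxJ χ = ⊥ :=
        bpa_inf_box_eq_bot S boxJ miJ miiJ hmeet hη hχS hηχ
      rw [disjoint_iff, eq_bot_iff]
      calc (bpa S boxI q.1 ⊓ bpa S boxJ q.2) ⊓ boxIJ χ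
          ≤ (bpa S boxI q.1 ⊓ bpa S boxJ q.2) ⊓ (boxI χ ⊔ boxJ χ) :=
            inf_le_inf_left _ (mindep χ)
        _ = ((bpa S boxI q.1 ⊓ bpa S boxJ q.2) ⊓ boxI χ) ⊔
            ((bpa S boxI q.1 ⊓ bpa S boxJ q.2) ⊓ boxJ χ) := inf_sup_left _ _ _
        _ ≤ ⊥ := by
            refine sup_le ?_ ?_
            · calc (bpa S boxI q.1 ⊓ bpa S boxJ q.2) ⊓ boxI χ
                  ≤ bpa S boxI q.1 ⊓ boxI χ := inf_le_inf_right _ inf_le_left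
                _ ≤ ⊥ := hI.le
            · calc (bpa S boxI q.1 ⊓ bpa S boxJ q.2) ⊓ boxJ χ
                  ≤ bpa S boxJ q.2 ⊓ boxJ χ := inf_le_inf_right _ inf_le_right
                _ ≤ ⊥ := hJ.le
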